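/- The weight map modulo 2 is additive with respect to Pauli multiplication only up to a correction: wt(c) ≡ wt(a) + wt(b) + |supp(a) ∩ supp(b)| + |{i ∈ supp(a) ∩ supp(b) : a(i) = b(i)}| (mod 2), where P(a)P(b) = λP(c). In particular, if P(a) and P(b) anticommute and have odd weight, then wt(c) is odd. -/

import Mathlib

open Matrix Complex

noncomputable def pauli : Fin 4 → Matrix (Fin 2) (Fin 2) ℂ
  | 0 => 1
  | 1 => !![0, 1; 1, 0]
  | 2 => !![0, -I; I, 0]
  | 3 => !![1, 0; 0, -1]

/-- Tensor product of Pauli matrices indexed by `a : Fin n → Fin 4`. -/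
noncomputable def PauliProd {n : ℕ} (a : Fin n → Fin 4) :
    Matrix (Fin n → Fin 2) (Fin n → Fin 2) ℂ :=
  Matrix.of fun i j => ∏ k, pauli (a k) (i k) (j k)

/-- Weight: the number of non-identity tensor factors. -/
noncomputable def wt {n : ℕ} (a : Fin n → Fin 4) : ℕ :=
  (Finset.univ.filter fun i => a i ≠ 0).card

/-- Support: the set of qubits on which the Pauli product acts nontrivially. -/
noncomputable def supp {n : ℕ} (a : Fin n → Fin 4) : Finset (Fin n) :=
  Finset.univ.filter fun i => a i ≠ 0

def pmul : Fin 4 → Fin 4 → Fin 4 := fun x y =>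
  if x = y then 0 else if x = 0 then y else if y = 0 then x
  else (⟨(6 - x.val - y.val) % 4, by omega⟩ : Fin 4)

noncomputable def phase : Fin 4 → Fin 4 → ℂ := fun x y =>
  if x = y ∨ x = 0 ∨ y = 0 then 1
  else if (x, y) ∈ ({(1,2),(2,3),(3,1)} : Set (Fin 4 × Fin 4)) then I else -I

lemma pauli_mul (x y : Fin 4) : pauli x * pauli y = phase x y • pauli (pmul x y) := by
  fin_cases x <;> fin_cases y <;>
    simp only [pauli, pmul, phase] <;>
    norm_num [Matrix.one_fin_two, Fin.ext_iff] <;>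
    ext i j <;> fin_cases i <;> fin_cases j <;>
    simp [Matrix.mul_apply, Fin.sum_univ_two, Complex.ext_iff]

lemma phase_ne_zero (x y : Fin 4) : phase x y ≠ 0 := by
  unfold phase; split <;> [norm_num; skip]; split <;> simp [Complex.I_ne_zero]

lemma phase_swap (x y : Fin 4) :
    phase y x = (if x = y ∨ x = 0 ∨ y = 0 then 1 else -1) * phase x y := by
  fin_cases x <;> fin_cases y <;> simp [phase] <;> norm_num

lemma pmul_eq_zero_iff : ∀ x y : Fin 4, (pmul x y = 0 ↔ x = y) := by decide

lemma pmul_comm : ∀ x y : Fin 4, pmul x y = pmul y x := by decide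

lemma PauliProd_mul {n : ℕ} (a b : Fin n → Fin 4) :
    PauliProd a * PauliProd b =
      (∏ k, phase (a k) (b k)) • PauliProd (fun k => pmul (a k) (b k)) := by
  ext i j
  have step1 : (PauliProd a * PauliProd b) i j
      = ∏ k, (pauli (a k) * pauli (b k)) (i k) (j k) := by
    simp only [Matrix.mul_apply, PauliProd, Matrix.of_apply, ← Finset.prod_mul_distrib]
    exact (Fintype.prod_sum fun k s => pauli (a k) (i k) s * pauli (b k) s (j k)).symm
  rw [step1]
  simp only [pauli_mul, Matrix.smul_apply, smul_eq_mul, Finset.prod_mul_distrib,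
    Matrix.smul_apply, PauliProd, Matrix.of_apply, smul_eq_mul]

def pcol : Fin 4 → Fin 2 → Fin 2 := fun x r => if x = 1 ∨ x = 2 then 1 - r else r

lemma pcol_spec (x : Fin 4) (r s : Fin 2) : pauli x r s ≠ 0 ↔ s = pcol x r := by
  fin_cases x <;> fin_cases r <;> fin_cases s <;>
    simp [pauli, pcol, Matrix.one_apply, Complex.I_ne_zero]

lemma pauli_distinguish (x y : Fin 4)
    (h0 : pcol x 0 = pcol y 0) (h1 : pcol x 1 = pcol y 1)
    (hc : pauli x 0 (pcol x 0) * pauli y 1 (pcol x 1)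
        = pauli x 1 (pcol x 1) * pauli y 0 (pcol x 0)) : x = y := by
  fin_cases x <;> fin_cases y <;>
    first
    | rfl
    | (exfalso; revert h0 h1 hc; decide)
    | (exfalso; revert hc; simp [pauli, pcol, Matrix.one_apply]; norm_num [Complex.ext_iff])

lemma PauliProd_entry_ne_zero {n : ℕ} (c : Fin n → Fin 4) (i : Fin n → Fin 2) :
    PauliProd c i (fun k => pcol (c k) (i k)) ≠ 0 := by
  simp only [PauliProd, Matrix.of_apply]
  exact Finset.prod_ne_zero_iff.2 fun k _ => (pcol_spec _ _ _).2 rfl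

lemma PauliProd_inj {n : ℕ} (c d : Fin n → Fin 4) (lam mu : ℂ)
    (hlam : lam ≠ 0) (hmu : mu ≠ 0)
    (h : lam • PauliProd c = mu • PauliProd d) : c = d := by
  have hent : ∀ i j, lam * PauliProd c i j = mu * PauliProd d i j := by
    intro i j
    have := congrFun (congrFun h i) j
    simpa using this
  have hdnz : ∀ i : Fin n → Fin 2, PauliProd d i (fun k => pcol (c k) (i k)) ≠ 0 := by
    intro i
    intro hz
    have h1 := hent i (fun k => pcol (c k) (i k))
    rw [hz, mul_zero] at h1
    exact PauliProd_entry_ne_zero c i (by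
      rcases mul_eq_zero.1 h1 with h' | h'
      · exact absurd h' hlam
      · exact h')
  have hpcol : ∀ (k : Fin n) (r : Fin 2), pcol (d k) r = pcol (c k) r := by
    intro k r
    set i : Fin n → Fin 2 := fun k' => if k' = k then r else 0 with hi
    have := hdnz i
    simp only [PauliProd, Matrix.of_apply] at this
    have hk := Finset.prod_ne_zero_iff.1 this k (Finset.mem_univ k)
    have : i k = r := by simp [hi]
    rw [this] at hk
    exact ((pcol_spec _ _ _).1 hk).symm
  funext k
  -- cross-ratio argument
  set i : Fin 2 → (Fin n → Fin 2) := fun r k' => if k' = k then r else 0 with hidef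
  set j : Fin 2 → (Fin n → Fin 2) := fun r k' => pcol (c k') (i r k') with hjdef
  set Tc : ℂ := ∏ k' ∈ Finset.univ.erase k, pauli (c k') 0 (pcol (c k') 0) with hTc
  set Td : ℂ := ∏ k' ∈ Finset.univ.erase k, pauli (d k') 0 (pcol (c k') 0) with hTd
  have hEc : ∀ r : Fin 2, PauliProd c (i r) (j r) = pauli (c k) r (pcol (c k) r) * Tc := by
    intro r
    simp only [PauliProd, Matrix.of_apply]
    rw [← Finset.mul_prod_erase _ _ (Finset.mem_univ k)]
    have hik : i r k = r := by simp [hidef]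
    congr 1
    · rw [hjdef]; simp [hik]
    · apply Finset.prod_congr rfl
      intro k' hk'
      have : i r k' = 0 := by
        simp only [hidef]; rw [if_neg (Finset.mem_erase.1 hk').1]
      rw [hjdef]; simp [this]
  have hEd : ∀ r : Fin 2, PauliProd d (i r) (j r) = pauli (d k) r (pcol (c k) r) * Td := by
    intro r
    simp only [PauliProd, Matrix.of_apply]
    rw [← Finset.mul_prod_erase _ _ (Finset.mem_univ k)]
    have hik : i r k = r := by simp [hidef]
    congr 1
    · rw [hjdef]; simp [hik]
    · apply Finset.prod_congr rfl
      intro k' hk'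
      have : i r k' = 0 := by
        simp only [hidef]; rw [if_neg (Finset.mem_erase.1 hk').1]
      rw [hjdef]; simp [this]
  have hTcnz : Tc ≠ 0 :=
    Finset.prod_ne_zero_iff.2 fun k' _ => (pcol_spec _ _ _).2 rfl
  have hTdnz : Td ≠ 0 :=
    Finset.prod_ne_zero_iff.2 fun k' _ => (pcol_spec _ _ _).2 (hpcol k' 0).symm
  have h0 := hent (i 0) (j 0)
  have h1 := hent (i 1) (j 1)
  rw [hEc 0, hEd 0] at h0
  rw [hEc 1, hEd 1] at h1
  have hcross : pauli (c k) 0 (pcol (c k) 0) * pauli (d k) 1 (pcol (c k) 1)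
      = pauli (c k) 1 (pcol (c k) 1) * pauli (d k) 0 (pcol (c k) 0) := by
    have key : lam * mu * Tc * Td * (pauli (c k) 0 (pcol (c k) 0) * pauli (d k) 1 (pcol (c k) 1))
        = lam * mu * Tc * Td * (pauli (c k) 1 (pcol (c k) 1) * pauli (d k) 0 (pcol (c k) 0)) := by
      linear_combination (mu * pauli (d k) 1 (pcol (c k) 1) * Td) * h0
        - (mu * pauli (d k) 0 (pcol (c k) 0) * Td) * h1
    exact mul_left_cancel₀ (by simp [hlam, hmu, hTcnz, hTdnz]) key
  exact pauli_distinguish _ _ (hpcol k 0).symm (hpcol k 1).symm hcross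

/-- Weight formula for the product of two Pauli products, and the consequence
that the product of two anticommuting odd-weight Pauli products has odd weight. -/
theorem weight_of_product {n : ℕ} (a b c : Fin n → Fin 4) (lam : ℂ)
    (hlam : lam ∈ ({1, -1, Complex.I, -Complex.I} : Set ℂ))
    (h : PauliProd a * PauliProd b = lam • PauliProd c) :
    (wt c : ℤ) = (wt a : ℤ) + (wt b : ℤ) - 2 * ((supp a ∩ supp b).card : ℤ)
        + (((supp a ∩ supp b).filter fun i => a i ≠ b i).card : ℤ) ∧
      (Odd (wt a) → Odd (wt b) →
        PauliProd a * PauliProd b = -(PauliProd b * PauliProd a) → Odd (wt c)) := by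
  classical
  have hlam0 : lam ≠ 0 := by
    simp only [Set.mem_insert_iff, Set.mem_singleton_iff] at hlam
    rcases hlam with rfl | rfl | rfl | rfl <;> simp [Complex.I_ne_zero]
  set d : Fin n → Fin 4 := fun k => pmul (a k) (b k) with hd
  set mu : ℂ := ∏ k, phase (a k) (b k) with hmudef
  have hmul : PauliProd a * PauliProd b = mu • PauliProd d := PauliProd_mul a b
  have hmu : mu ≠ 0 := Finset.prod_ne_zero_iff.2 fun k _ => phase_ne_zero _ _
  have hcd : c = d := PauliProd_inj c d lam mu hlam0 hmu (by rw [← h, hmul])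
  set Iab := supp a ∩ supp b with hIab
  set U := supp a ∪ supp b with hU
  set S := Iab.filter fun i => a i ≠ b i with hS
  have hwtc : wt c = (Finset.univ.filter fun i => a i ≠ b i).card := by
    rw [hcd]; unfold wt
    congr 1
    apply Finset.filter_congr
    intro i _
    simp only [hd, ne_eq, pmul_eq_zero_iff]
  have hsplit : (Finset.univ.filter fun i => a i ≠ b i) = (U \ Iab) ∪ S := by
    ext i
    simp only [hU, hIab, hS, supp, Finset.mem_filter, Finset.mem_sdiff, Finset.mem_union,
      Finset.mem_inter, Finset.mem_univ, true_and]
    by_cases h1 : a i = 0 <;> by_cases h2 : b i = 0 <;> simp [h1, h2] <;> tauto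
  have hdisj : Disjoint (U \ Iab) S :=
    Finset.sdiff_disjoint.mono_right (Finset.filter_subset _ _)
  have hIabU : Iab ⊆ U := Finset.inter_subset_union
  have hcard1 : (U \ Iab).card = U.card - Iab.card := Finset.card_sdiff_of_subset hIabU
  have hle : Iab.card ≤ U.card := Finset.card_le_card hIabU
  have hUI : U.card + Iab.card = wt a + wt b := Finset.card_union_add_card_inter _ _
  have hwtc2 : wt c = U.card - Iab.card + S.card := by
    rw [hwtc, hsplit, Finset.card_union_of_disjoint hdisj, hcard1]
  have hform : (wt c : ℤ) = (wt a : ℤ) + (wt b : ℤ) - 2 * ((supp a ∩ supp b).card : ℤ)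
      + (((supp a ∩ supp b).filter fun i => a i ≠ b i).card : ℤ) := by
    rw [← hIab, ← hS]
    omega
  refine ⟨hform, fun ha hb hanti => ?_⟩
  set nu : ℂ := ∏ k, phase (b k) (a k) with hnudef
  have hdd : (fun k => pmul (b k) (a k)) = d := funext fun k => pmul_comm (b k) (a k)
  have hmul' : PauliProd b * PauliProd a = nu • PauliProd d := by
    have := PauliProd_mul b a
    rwa [hdd] at this
  rw [hmul, hmul'] at hanti
  have hnu : nu ≠ 0 := Finset.prod_ne_zero_iff.2 fun k _ => phase_ne_zero _ _
  have hPd0 : PauliProd d (fun _ => 0) (fun k => pcol (d k) 0) ≠ 0 :=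
    PauliProd_entry_ne_zero d _
  have hsc : mu = -nu := by
    have h2 := congrFun (congrFun hanti (fun _ => 0)) (fun k => pcol (d k) 0)
    simp only [Matrix.smul_apply, Matrix.neg_apply, smul_eq_mul] at h2
    have h3 : (mu + nu) * PauliProd d (fun _ => 0) (fun k => pcol (d k) 0) = 0 := by
      ring_nf
      linear_combination h2
    rcases mul_eq_zero.1 h3 with h4 | h4
    · linear_combination h4
    · exact absurd h4 hPd0
  have hnuswap : nu = (∏ k, (if a k = b k ∨ a k = 0 ∨ b k = 0 then (1:ℂ) else -1)) * mu := by
    rw [hnudef, hmudef, ← Finset.prod_mul_distrib]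
    exact Finset.prod_congr rfl fun k _ => phase_swap (a k) (b k)
  have hP : (∏ k, (if a k = b k ∨ a k = 0 ∨ b k = 0 then (1:ℂ) else -1)) = -1 := by
    have h5 : mu = -((∏ k, (if a k = b k ∨ a k = 0 ∨ b k = 0 then (1:ℂ) else -1)) * mu) := by
      rw [← hnuswap]; exact hsc
    have h6 : ((∏ k, (if a k = b k ∨ a k = 0 ∨ b k = 0 then (1:ℂ) else -1)) + 1) * mu = 0 := by
      linear_combination h5
    rcases mul_eq_zero.1 h6 with h7 | h7
    · linear_combination h7
    · exact absurd h7 hmu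
  have hPpow : (∏ k, (if a k = b k ∨ a k = 0 ∨ b k = 0 then (1:ℂ) else -1))
      = (-1 : ℂ) ^ (Finset.univ.filter fun k => ¬(a k = b k ∨ a k = 0 ∨ b k = 0)).card := by
    rw [Finset.prod_ite, Finset.prod_const, Finset.prod_const, one_pow, one_mul]
  have hSeq : (Finset.univ.filter fun k => ¬(a k = b k ∨ a k = 0 ∨ b k = 0)) = S := by
    ext i
    simp only [hS, hIab, supp, Finset.mem_filter, Finset.mem_inter, Finset.mem_univ, true_and]
    tauto
  have hoddS : Odd S.card := by
    rcases Nat.even_or_odd S.card with he | ho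
    · exfalso
      rw [hPpow, hSeq, he.neg_one_pow] at hP
      norm_num at hP
    · exact ho
  rcases ha with ⟨p, hp⟩
  rcases hb with ⟨q, hq⟩
  rcases hoddS with ⟨r, hr⟩
  have : wt c % 2 = 1 := by omega
  exact Nat.odd_iff.2 this
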